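/- arXiv:1401.1103 — 7 statements merged into one kernel-verified Lean document; each statement's English description precedes it below -/
import Mathlib

section
/- Let A be a Boolean algebra, V a set, and f : A → ℘(V) an injective Boolean homomorphism with f(⊤) = V such that whenever X ⊆ A has a supremum ⨆X in A, f(⨆X) = ⋃_{x∈X} f(x). Then A is atomic, and moreover ⋃_{a ∈ At A} f(a) = V. -/
/-- If `f : A → ℘(V)` is a complete representation of the Boolean
algebra `A` (an injective Boolean homomorphism with `f ⊤ = V` carrying all
existing suprema to unions), then `A` is atomic and the images of the atoms
cover `V`. -/
theorem stmt3 (A : Type*) [BooleanAlgebra A] (V : Type*)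
    (f : A → Set V)
    (finj : Function.Injective f)
    (fsup : ∀ a b : A, f (a ⊔ b) = f a ∪ f b)
    (finf : ∀ a b : A, f (a ⊓ b) = f a ∩ f b)
    (fcompl : ∀ a : A, f aᶜ = (f a)ᶜ)
    (ftop : f ⊤ = Set.univ)
    (fSup : ∀ (X : Set A) (s : A), IsLUB X s → f s = ⋃ x ∈ X, f x) :
    IsAtomic A ∧ (⋃ a ∈ {x : A | IsAtom x}, f a) = Set.univ := by
  have fbot : f ⊥ = ∅ := by
    have h := fcompl ⊤
    rw [compl_top] at h
    rw [h, ftop, Set.compl_univ]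
  have key : ∀ v : V, ∃ c : A, IsAtom c ∧ v ∈ f c := by
    intro v
    by_contra h
    push_neg at h
    have hlub : IsLUB {a : A | v ∉ f a} ⊤ := by
      constructor
      · intro a _
        exact le_top
      · intro u hu
        by_contra hu2
        have hune : u ≠ ⊤ := fun e => hu2 (e ▸ le_rfl)
        have hcne : uᶜ ≠ ⊥ := by simpa using hune
        have sub : ∀ b : A, b ≤ uᶜ → b ≠ ⊥ → v ∈ f b := by
          intro b hbc hbne
          by_contra hvb
          have hbu : b ≤ u := hu hvb
          have hb : b ≤ ⊥ := by
            calc b ≤ u ⊓ uᶜ := le_inf hbu hbc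
            _ = ⊥ := inf_compl_eq_bot
          exact hbne (le_bot_iff.mp hb)
        have hatom : IsAtom uᶜ := by
          constructor
          · exact hcne
          · intro b hb
            by_contra hbne
            have h1 : v ∈ f b := sub b hb.le hbne
            have h2 : v ∈ f (uᶜ \ b) := by
              apply sub _ sdiff_le
              intro he
              exact (not_le_of_gt hb) (sdiff_eq_bot_iff.mp he)
            rw [sdiff_eq, finf, fcompl b] at h2
            exact h2.2 h1
        exact h uᶜ hatom (sub uᶜ le_rfl hcne)
    have hv : v ∈ f ⊤ := by rw [ftop]; trivial
    rw [fSup _ _ hlub] at hv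
    obtain ⟨a, ha, hva⟩ := Set.mem_iUnion₂.mp hv
    exact ha hva
  constructor
  · constructor
    intro a
    by_cases hab : a = ⊥
    · exact Or.inl hab
    · right
      have hne : f a ≠ ∅ := fun e => hab (finj (e.trans fbot.symm))
      obtain ⟨v, hv⟩ := Set.nonempty_iff_ne_empty.mpr hne
      obtain ⟨c, hc, hvc⟩ := key v
      refine ⟨c, hc, ?_⟩
      have hvac : v ∈ f (a ⊓ c) := by rw [finf]; exact ⟨hv, hvc⟩
      have hne2 : a ⊓ c ≠ ⊥ := by
        intro e
        rw [e, fbot] at hvac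
        exact hvac
      rcases lt_or_eq_of_le (inf_le_right : a ⊓ c ≤ c) with hlt | heq
      · exact absurd (hc.2 _ hlt) hne2
      · exact heq ▸ inf_le_left
  · ext v
    simp only [Set.mem_iUnion, Set.mem_univ, iff_true, Set.mem_setOf_eq]
    obtain ⟨c, hc, hvc⟩ := key v
    exact ⟨c, hc, hvc⟩
end

section
/- Let A be a Boolean algebra, V a nonempty set, and f : A → ℘(V) an injective Boolean homomorphism with f(⊤)=V. Then f is a complete representation (i.e. f preserves all existing suprema, carrying them to unions) if and only if f is an atomic representation, i.e. for every s ∈ V the set f⁻¹(s) = { a ∈ A : s ∈ f(a) } is a principal ultrafilter of A. -/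
/-- A representation `f : A → ℘(V)` (injective Boolean
homomorphism with `f ⊤ = V`, `V` nonempty) is complete (preserves all existing
suprema, carrying them to unions) iff it is atomic, i.e. for every `s ∈ V` the
ultrafilter `f⁻¹(s) = {a : s ∈ f a}` is principal, generated by an atom. -/
theorem stmt4 (A V : Type*) [BooleanAlgebra A] [Nonempty V]
    (f : A → Set V)
    (finj : Function.Injective f)
    (fsup : ∀ a b : A, f (a ⊔ b) = f a ∪ f b)
    (finf : ∀ a b : A, f (a ⊓ b) = f a ∩ f b)
    (fcompl : ∀ a : A, f aᶜ = (f a)ᶜ)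
    (ftop : f ⊤ = Set.univ) :
    (∀ (X : Set A) (s : A), IsLUB X s → f s = ⋃ x ∈ X, f x) ↔
    (∀ s : V, ∃ x : A, IsAtom x ∧ {a : A | s ∈ f a} = {a : A | x ≤ a}) := by
  have fmono : ∀ {a b : A}, a ≤ b → f a ⊆ f b := by
    intro a b hab
    have h : f a = f a ∩ f b := by rw [← finf, inf_eq_left.mpr hab]
    rw [h]; exact Set.inter_subset_right
  constructor
  · intro hcomp s
    by_contra hno
    push_neg at hno
    set S : Set A := {b : A | s ∉ f b} with hS
    have hub : ∀ y ∈ upperBounds S, y = ⊤ := by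
      intro y hy
      by_contra hy'
      have hyc : yᶜ ≠ ⊥ := by
        simpa [compl_eq_bot] using hy'
      have key : ∀ b : A, b ≠ ⊥ → b ≤ yᶜ → s ∈ f b := by
        intro b hb hle
        by_contra hsb
        have h1 : b ≤ y := hy hsb
        have h2 : b ≤ ⊥ := by
          calc b ≤ y ⊓ yᶜ := le_inf h1 hle
          _ = ⊥ := inf_compl_eq_bot
        exact hb (le_bot_iff.mp h2)
      have hatom : IsAtom yᶜ := by
        refine ⟨hyc, fun b hb => ?_⟩
        by_contra hb0
        have hsb : s ∈ f b := key b hb0 hb.le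
        by_cases h : bᶜ ⊓ yᶜ = ⊥
        · have hd : Disjoint yᶜ bᶜ := (disjoint_iff.mpr h).symm
          have hle : yᶜ ≤ b := by
            have := le_compl_iff_disjoint_right.mpr hd
            simpa using this
          exact absurd hle hb.not_ge
        · have h3 : s ∈ f bᶜ := fmono inf_le_left (key _ h inf_le_right)
          rw [fcompl] at h3
          exact h3 hsb
      apply hno yᶜ hatom
      ext a
      simp only [Set.mem_setOf_eq]
      constructor
      · intro ha
        by_contra hle
        have h : yᶜ ⊓ aᶜ ≠ ⊥ := by
          intro h0
          have hd : Disjoint yᶜ aᶜ := disjoint_iff.mpr h0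
          have h1 : yᶜ ≤ a := by
            have := le_compl_iff_disjoint_right.mpr hd
            simpa using this
          exact hle h1
        have h1 : s ∈ f aᶜ := fmono inf_le_right (key _ h inf_le_left)
        rw [fcompl] at h1; exact h1 ha
      · intro hle
        exact fmono hle (key _ hyc le_rfl)
    have hlub : IsLUB S ⊤ := ⟨fun b _ => le_top, fun y hy => (hub y hy).ge⟩
    have h := hcomp S ⊤ hlub
    rw [ftop] at h
    have h1 : s ∈ ⋃ x ∈ S, f x := h ▸ Set.mem_univ s
    simp only [Set.mem_iUnion] at h1
    obtain ⟨b, hb, hsb⟩ := h1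
    exact hb hsb
  · intro hatomic X s hlub
    ext t
    simp only [Set.mem_iUnion]
    constructor
    · intro ht
      obtain ⟨x, hx, hset⟩ := hatomic t
      have hmem : ∀ a : A, t ∈ f a ↔ x ≤ a := fun a => by
        have := Set.ext_iff.mp hset a; simpa using this
      have hxs : x ≤ s := (hmem s).mp ht
      by_contra hc
      push_neg at hc
      have hub : xᶜ ∈ upperBounds X := by
        intro a ha
        have hna : ¬ x ≤ a := fun h => hc a ha ((hmem a).mpr h)
        have hlt : x ⊓ a < x := lt_of_le_of_ne inf_le_left
          (fun h => hna (h ▸ inf_le_right))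
        have h0 : x ⊓ a = ⊥ := hx.2 _ hlt
        have hd : Disjoint x a := disjoint_iff.mpr h0
        exact le_compl_iff_disjoint_left.mpr hd
      have h1 : s ≤ xᶜ := hlub.2 hub
      have h2 : x ≤ ⊥ := by
        calc x ≤ x ⊓ xᶜ := le_inf le_rfl (hxs.trans h1)
        _ = ⊥ := inf_compl_eq_bot
      exact hx.1 (le_bot_iff.mp h2)
    · rintro ⟨a, ha, hta⟩
      exact fmono (hlub.1 ha) hta
end

section
/- Let A be an atomic Boolean algebra, V a set, and f : A → ℘(V) a complete representation of A (an injective Boolean homomorphism with f(⊤)=V preserving all existing suprema as unions). Then the map g : ℘(At A) → ℘(V) defined by g(X) = ⋃_{x ∈ X} f(x) is an injective Boolean algebra homomorphism. -/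
/-- A complete representation `f` of an atomic Boolean algebra `A`
induces an injective Boolean homomorphism `g : ℘(At A) → ℘(V)`,
`g X = ⋃_{x ∈ X} f x`; i.e. a representation of the completion `Cm(At A)`. -/
theorem stmt5 (A V : Type*) [BooleanAlgebra A] [IsAtomic A]
    (f : A → Set V)
    (finj : Function.Injective f)
    (fsup : ∀ a b : A, f (a ⊔ b) = f a ∪ f b)
    (finf : ∀ a b : A, f (a ⊓ b) = f a ∩ f b)
    (fcompl : ∀ a : A, f aᶜ = (f a)ᶜ)
    (ftop : f ⊤ = Set.univ)
    (fSup : ∀ (X : Set A) (s : A), IsLUB X s → f s = ⋃ x ∈ X, f x)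
    (g : Set {x : A // IsAtom x} → Set V)
    (hg : ∀ X : Set {x : A // IsAtom x}, g X = ⋃ x ∈ X, f (x : A)) :
    Function.Injective g ∧
    (∀ X Y, g (X ∪ Y) = g X ∪ g Y) ∧
    (∀ X Y, g (X ∩ Y) = g X ∩ g Y) ∧
    (∀ X, g Xᶜ = (g X)ᶜ) ∧
    g ∅ = ∅ ∧ g Set.univ = Set.univ := by
  have fbot : f ⊥ = ∅ := by
    have := fcompl ⊤
    rw [compl_top, ftop, Set.compl_univ] at this
    exact this
  -- distinct atoms have disjoint images
  have hdisj : ∀ x y : {x : A // IsAtom x}, x ≠ y → f (x : A) ∩ f (y : A) = ∅ := by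
    intro x y hxy
    have hd : Disjoint (x : A) (y : A) :=
      x.2.disjoint_of_ne y.2 (fun h => hxy (Subtype.ext h))
    rw [← finf, disjoint_iff.mp hd, fbot]
  -- images of atoms are nonempty
  have hne : ∀ x : {x : A // IsAtom x}, (f (x : A)).Nonempty := by
    intro x
    rw [Set.nonempty_iff_ne_empty]
    intro h
    exact x.2.1 (finj (h.trans fbot.symm))
  -- ⊤ is the LUB of the atoms
  have hlub : IsLUB {a : A | IsAtom a} ⊤ := by
    constructor
    · intro a _; exact le_top
    · intro s hs
      rcases IsAtomic.eq_bot_or_exists_atom_le sᶜ with h | ⟨a, ha, hle⟩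
      · rw [← compl_le_compl_iff_le, compl_top, ← h]
      · exact absurd (le_inf (hs ha) hle)
          (by rw [inf_compl_eq_bot]; exact fun h => ha.1 (le_bot_iff.mp h))
  have guniv : g Set.univ = Set.univ := by
    rw [hg, ← ftop, fSup {a : A | IsAtom a} ⊤ hlub]
    ext v
    simp only [Set.mem_iUnion]
    constructor
    · rintro ⟨x, _, hv⟩; exact ⟨x, x.2, hv⟩
    · rintro ⟨a, ha, hv⟩; exact ⟨⟨a, ha⟩, trivial, hv⟩
  have gempty : g ∅ = ∅ := by rw [hg]; simp
  have gunion : ∀ X Y, g (X ∪ Y) = g X ∪ g Y := by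
    intro X Y; rw [hg, hg, hg, Set.biUnion_union]
  have ginter : ∀ X Y, g (X ∩ Y) = g X ∩ g Y := by
    intro X Y
    ext v
    simp only [hg, Set.mem_iUnion, Set.mem_inter_iff]
    constructor
    · rintro ⟨x, ⟨hX, hY⟩, hv⟩; exact ⟨⟨x, hX, hv⟩, ⟨x, hY, hv⟩⟩
    · rintro ⟨⟨x, hX, hvx⟩, ⟨y, hY, hvy⟩⟩
      have hxy : x = y := by
        by_contra h
        have := hdisj x y h
        exact absurd this (Set.nonempty_iff_ne_empty.mp ⟨v, hvx, hvy⟩)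
      exact ⟨x, ⟨hX, hxy ▸ hY⟩, hvx⟩
  have gcompl : ∀ X, g Xᶜ = (g X)ᶜ := by
    intro X
    have h1 : g X ∪ g Xᶜ = Set.univ := by
      rw [← gunion, Set.union_compl_self, guniv]
    have h2 : g X ∩ g Xᶜ = ∅ := by
      rw [← ginter, Set.inter_compl_self, gempty]
    ext v
    constructor
    · intro hv
      intro hvX
      exact absurd h2 (Set.nonempty_iff_ne_empty.mp ⟨v, hvX, hv⟩)
    · intro hv
      rcases (h1 ▸ Set.mem_univ v : v ∈ g X ∪ g Xᶜ) with h | h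
      · exact absurd h hv
      · exact h
  refine ⟨?_, gunion, ginter, gcompl, gempty, guniv⟩
  intro X Y hXY
  have key : ∀ X Y : Set {x : A // IsAtom x}, g X = g Y → X ⊆ Y := by
    intro X Y h x hx
    obtain ⟨v, hv⟩ := hne x
    have hvX : v ∈ g X := by rw [hg]; exact Set.mem_biUnion hx hv
    rw [h, hg] at hvX
    obtain ⟨y, hy, hvy⟩ := Set.mem_iUnion₂.mp hvX
    have : x = y := by
      by_contra hxy
      exact absurd (hdisj x y hxy) (Set.nonempty_iff_ne_empty.mp ⟨v, hv, hvy⟩)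
    exact this ▸ hy
  exact Set.Subset.antisymm (key X Y hXY) (key Y X hXY.symm)
end

section
/- Let n, m ∈ ℕ with n ≥ 1. Let R and R' be finite sets with |R| ≥ n·2^m and |R'| ≥ n·2^m, and let (R_S)_{S ⊆ Fin m} be a partition of R into 2^m (possibly empty) parts. Then there is a partition (R'_S)_{S ⊆ Fin m} of R' such that for every S: if |R_S| < n then |R'_S| = |R_S|, and |R'_S| ≥ n if and only if |R_S| ≥ n. -/
lemma stmt9_aux {ι β : Type*} [DecidableEq ι] [DecidableEq β] (t : ι → ℕ) (s : Finset ι) :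
    ∀ B : Finset β, (∑ i ∈ s, t i) = B.card →
    ∃ Q : ι → Finset β, (∀ i, Q i ⊆ B) ∧ (∀ i j, i ≠ j → Disjoint (Q i) (Q j)) ∧
      (∀ x ∈ B, ∃ i ∈ s, x ∈ Q i) ∧ (∀ i ∈ s, (Q i).card = t i) := by
  induction s using Finset.cons_induction with
  | empty =>
    intro B hB
    have : B = ∅ := Finset.card_eq_zero.mp (by simpa using hB.symm)
    subst this
    exact ⟨fun _ => ∅, fun _ => Finset.Subset.refl _, fun _ _ _ => Finset.disjoint_empty_left _,
      by simp, by simp⟩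
  | cons i s hi ih =>
    intro B hB
    rw [Finset.sum_cons] at hB
    have h1 : t i ≤ B.card := by omega
    obtain ⟨A, hAB, hA⟩ := Finset.exists_subset_card_eq h1
    obtain ⟨Q, hQsub, hQdisj, hQcov, hQcard⟩ := ih (B \ A)
      (by rw [Finset.card_sdiff_of_subset hAB, hA]; omega)
    refine ⟨fun j => if j = i then A else Q j, ?_, ?_, ?_, ?_⟩
    · intro j; dsimp only; split
      · exact hAB
      · exact (hQsub j).trans (Finset.sdiff_subset)
    · intro j k hjk; dsimp only
      split_ifs with h1 h2 h2
      · exact absurd (h1.trans h2.symm) hjk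
      · exact Finset.disjoint_left.mpr fun x hx hx' =>
          (Finset.mem_sdiff.mp (hQsub k hx')).2 hx
      · exact Finset.disjoint_left.mpr fun x hx hx' =>
          (Finset.mem_sdiff.mp (hQsub j hx)).2 hx'
      · exact hQdisj j k hjk
    · intro x hx
      by_cases hxA : x ∈ A
      · exact ⟨i, Finset.mem_cons_self i s, by simp [hxA]⟩
      · obtain ⟨j, hj, hxj⟩ := hQcov x (Finset.mem_sdiff.mpr ⟨hx, hxA⟩)
        have hji : j ≠ i := fun h => hi (h ▸ hj)
        exact ⟨j, Finset.mem_cons.mpr (Or.inr hj), by simp [hji, hxj]⟩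
    · intro j hj
      rcases Finset.mem_cons.mp hj with h | h
      · simp [h, hA]
      · have hji : j ≠ i := fun h' => hi (h' ▸ h)
        simp [hji, hQcard j h]

/-- matching-partition lemma. Given `n ≥ 1`, finite sets `R, R'`
of size `≥ n·2^m`, and a partition `(P S)_{S ⊆ Fin m}` of `R`, there is a
partition `(P' S)_{S ⊆ Fin m}` of `R'` matching the sizes of the parts below
the threshold `n`, and the property of having size `≥ n`, part by part. -/
theorem stmt9 (n m : ℕ) (hn : 1 ≤ n) (α β : Type*) [DecidableEq α] [DecidableEq β]
    (R : Finset α) (R' : Finset β)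
    (hR : n * 2 ^ m ≤ R.card) (hR' : n * 2 ^ m ≤ R'.card)
    (P : Finset (Fin m) → Finset α)
    (hPsub : ∀ S, P S ⊆ R)
    (hPdisj : ∀ S T, S ≠ T → Disjoint (P S) (P T))
    (hPcover : ∀ x ∈ R, ∃ S, x ∈ P S) :
    ∃ P' : Finset (Fin m) → Finset β,
      (∀ S, P' S ⊆ R') ∧
      (∀ S T, S ≠ T → Disjoint (P' S) (P' T)) ∧
      (∀ x ∈ R', ∃ S, x ∈ P' S) ∧
      (∀ S, (P S).card < n → (P' S).card = (P S).card) ∧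
      (∀ S, n ≤ (P' S).card ↔ n ≤ (P S).card) := by
  classical
  -- the index type has 2^m elements
  have hcard : (Finset.univ : Finset (Finset (Fin m))).card = 2 ^ m := by
    simp [Finset.card_univ]
  -- R is the disjoint union of the parts
  have hRbi : R = Finset.univ.biUnion P := by
    ext x
    simp only [Finset.mem_biUnion, Finset.mem_univ, true_and]
    constructor
    · exact hPcover x
    · rintro ⟨S, hS⟩; exact hPsub S hS
  have hsum : ∑ S : Finset (Fin m), (P S).card = R.card := by
    rw [hRbi, Finset.card_biUnion]
    intro S _ T _ hST; exact hPdisj S T hST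
  -- there is a big part
  have hex : ∃ S₀ : Finset (Fin m), n ≤ (P S₀).card := by
    by_contra h
    push_neg at h
    have : ∑ S : Finset (Fin m), (P S).card ≤ ∑ _S : Finset (Fin m), (n - 1) :=
      Finset.sum_le_sum fun S _ => by have := h S; omega
    rw [Finset.sum_const, hcard, smul_eq_mul] at this
    have h2 : 1 ≤ 2 ^ m := Nat.one_le_two_pow
    have hmul : 2 ^ m * (n - 1) + 2 ^ m = 2 ^ m * n := by
      rw [← Nat.mul_succ]; congr 1; omega
    have hcomm : 2 ^ m * n = n * 2 ^ m := Nat.mul_comm _ _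
    omega
  obtain ⟨S₀, hS₀⟩ := hex
  set t₀ : Finset (Fin m) → ℕ := fun S => min (P S).card n with ht₀
  have ht₀le : ∀ S, t₀ S ≤ n := fun S => min_le_right _ _
  have hsumt₀ : ∑ S : Finset (Fin m), t₀ S ≤ n * 2 ^ m := by
    calc ∑ S : Finset (Fin m), t₀ S ≤ ∑ _S : Finset (Fin m), n :=
          Finset.sum_le_sum fun S _ => ht₀le S
      _ = n * 2 ^ m := by rw [Finset.sum_const, hcard, smul_eq_mul, mul_comm]
  have ht₀S₀ : t₀ S₀ = n := by simp [ht₀, hS₀]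
  set A : ℕ := ∑ S ∈ Finset.univ.erase S₀, t₀ S with hA
  have hsplit : A + t₀ S₀ = ∑ S : Finset (Fin m), t₀ S := by
    rw [hA, Finset.sum_erase_add _ _ (Finset.mem_univ S₀)]
  have hAn : A + n ≤ R'.card := by
    calc A + n = ∑ S : Finset (Fin m), t₀ S := by rw [← hsplit, ht₀S₀]
      _ ≤ n * 2 ^ m := hsumt₀
      _ ≤ R'.card := hR'
  set t : Finset (Fin m) → ℕ := fun S => if S = S₀ then R'.card - A else t₀ S with ht
  have hsumt : ∑ S : Finset (Fin m), t S = R'.card := by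
    rw [← Finset.sum_erase_add _ _ (Finset.mem_univ S₀)]
    have h1 : ∑ S ∈ Finset.univ.erase S₀, t S = A := by
      apply Finset.sum_congr rfl
      intro S hS
      have : S ≠ S₀ := (Finset.mem_erase.mp hS).1
      simp [ht, this]
    rw [h1]
    simp only [ht, if_pos rfl]
    omega
  obtain ⟨Q, hQsub, hQdisj, hQcov, hQcard⟩ := stmt9_aux t Finset.univ R' hsumt
  have hQcard' : ∀ S, (Q S).card = t S := fun S => hQcard S (Finset.mem_univ S)
  refine ⟨Q, hQsub, hQdisj, ?_, ?_, ?_⟩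
  · intro x hx
    obtain ⟨S, _, hS⟩ := hQcov x hx
    exact ⟨S, hS⟩
  · intro S hSn
    have hSne : S ≠ S₀ := fun h => by rw [h] at hSn; omega
    rw [hQcard' S]
    simp only [ht, ht₀, if_neg hSne]
    omega
  · intro S
    rw [hQcard' S]
    by_cases h : S = S₀
    · subst h
      simp only [ht, if_pos rfl]
      constructor
      · intro _; exact hS₀
      · intro _; omega
    · simp only [ht, ht₀, if_neg h]
      omega
end

section
/- With H = η(Γ) as above (n ≥ 3), define (K,∼) ≡_i (K',∼') iff K(i)=K'(i) and the restrictions of ∼ and ∼' to Fin n \ {i} agree. Then each element of H is determined by its ≡_i-classes: if (K,∼), (K',∼') ∈ H satisfy (K,∼) ≡_i (K',∼') for every i < n, then (K,∼) = (K',∼'). Equivalently, in the complex algebra over H, {(K,∼)} = ⋂_{i<n} c_i{(K,∼)} where c_i X = { c : ∃ a ∈ X, a ≡_i c }. -/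
def IndepSet {V : Type*} (Γ : SimpleGraph V) (n : ℕ)
    (X : Set (V × Fin n)) : Prop :=
  ∀ p ∈ X, ∀ q ∈ X, ¬ Γ.Adj p.1 q.1

def MonkCond {V : Type*} (Γ : SimpleGraph V) (n : ℕ)
    (K : Fin n → Option (V × Fin n)) (s : Setoid (Fin n)) : Prop :=
  (Nat.card (Quotient s) = n →
      (∀ i, (K i).isSome) ∧
      ¬ IndepSet Γ n {p | ∃ i, K i = some p}) ∧
  (Nat.card (Quotient s) = n - 1 →
      ∃ i j : Fin n, i ≠ j ∧ s.r i j ∧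
        (∀ x, (K x).isSome ↔ (x = i ∨ x = j)) ∧ K i = K j) ∧
  (Nat.card (Quotient s) ≤ n - 2 → ∀ i, K i = none)

/-- The atom structure `η(Γ)` as a type. -/
def EtaGamma {V : Type*} (Γ : SimpleGraph V) (n : ℕ) :=
  {p : (Fin n → Option (V × Fin n)) × Setoid (Fin n) // MonkCond Γ n p.1 p.2}

/-- `(K,∼) ≡_i (K',∼')` iff `K i = K' i` and the restrictions of `∼`, `∼'` to
`Fin n \ {i}` agree. -/
def EqI {V : Type*} (Γ : SimpleGraph V) (n : ℕ) (i : Fin n)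
    (a b : EtaGamma Γ n) : Prop :=
  a.1.1 i = b.1.1 i ∧
  ∀ x y : Fin n, x ≠ i → y ≠ i → (a.1.2.r x y ↔ b.1.2.r x y)

theorem stmt13_aux {V : Type*} (Γ : SimpleGraph V) (n : ℕ) (hn : 3 ≤ n)
    (a b : EtaGamma Γ n) (h : ∀ i : Fin n, EqI Γ n i a b) : a = b := by
  apply Subtype.ext
  have hK : a.1.1 = b.1.1 := funext fun i => (h i).1
  have hS : a.1.2 = b.1.2 := by
    apply Setoid.ext
    intro x y
    obtain ⟨i, hi⟩ : ∃ i : Fin n, i ≠ x ∧ i ≠ y := by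
      have hcard : ({x, y} : Finset (Fin n)).card < Fintype.card (Fin n) := by
        calc ({x, y} : Finset (Fin n)).card ≤ 2 := Finset.card_insert_le _ _ |>.trans (by simp)
          _ < n := by omega
          _ = Fintype.card (Fin n) := (Fintype.card_fin n).symm
      by_contra hc
      push_neg at hc
      have : (Finset.univ : Finset (Fin n)) ⊆ {x, y} := by
        intro i _
        by_cases h1 : i = x
        · simp [h1]
        · simp [hc i h1]
      have hle := Finset.card_le_card this
      simp only [Finset.card_univ, Fintype.card_fin] at hle
      have h2 : ({x, y} : Finset (Fin n)).card ≤ 2 :=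
        (Finset.card_insert_le _ _).trans (by simp)
      omega
    exact (h i).2 x y (Ne.symm hi.1) (Ne.symm hi.2)
  exact Prod.ext hK hS

/-- each element of `η(Γ)` is determined by its `≡_i` classes;
equivalently every singleton is the intersection of its cylindrifications
`c_i{(K,∼)} = {c : ∃ a ∈ {(K,∼)}, a ≡_i c}`. -/
theorem stmt13 {V : Type*} (Γ : SimpleGraph V) (n : ℕ) (hn : 3 ≤ n) :
    (∀ a b : EtaGamma Γ n, (∀ i : Fin n, EqI Γ n i a b) → a = b) ∧
    (∀ a : EtaGamma Γ n,
      ({a} : Set (EtaGamma Γ n)) =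
        ⋂ i : Fin n, {c : EtaGamma Γ n | ∃ x ∈ ({a} : Set (EtaGamma Γ n)),
          EqI Γ n i x c}) := by
  refine ⟨stmt13_aux Γ n hn, fun a => ?_⟩
  ext c
  simp only [Set.mem_iInter, Set.mem_setOf_eq, Set.mem_singleton_iff]
  constructor
  · rintro rfl i
    exact ⟨c, rfl, rfl, fun _ _ _ _ => Iff.rfl⟩
  · intro h
    exact (stmt13_aux Γ n hn a c (fun i => by obtain ⟨x, rfl, hx⟩ := h i; exact hx)).symm
end

section
/- Let U be a nonempty set, n ∈ ℕ, and f₀ ∈ ᴼᵐᵉᵍᵃU (a function ω → U). Let W = { f : ω → U : f(k) = f₀(k) for all but finitely many k }. Let B be the collection of subsets X ⊆ W such that for every j ≥ n, whenever f ∈ X and g ∈ W agree everywhere except possibly at j, then g ∈ X. Then B is a Boolean subalgebra of ℘(W), B is atomic, and its atoms are exactly the sets A_s = { g ∈ W : g↾n = s } for s ∈ ⁿU. Consequently B is isomorphic as a Boolean algebra to ℘(ⁿU). -/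
section Aux

variable {U : Type*} (n : ℕ) (f₀ : ℕ → U)

/-- The key lemma: a set in `B` containing `f` contains every `g ∈ W`
agreeing with `f` below `n`. -/
private lemma stmt14_key
    (X : Set (ℕ → U)) (hXW : X ⊆ {f : ℕ → U | {k : ℕ | f k ≠ f₀ k}.Finite})
    (hX : ∀ j : ℕ, n ≤ j → ∀ f ∈ X,
      ∀ g ∈ {f : ℕ → U | {k : ℕ | f k ≠ f₀ k}.Finite},
      (∀ k : ℕ, k ≠ j → g k = f k) → g ∈ X)
    {f : ℕ → U} (hf : f ∈ X) {g : ℕ → U} (hg : {k : ℕ | g k ≠ f₀ k}.Finite)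
    (hagree : ∀ i, i < n → g i = f i) : g ∈ X := by
  have hDfin : ∀ f' : ℕ → U, f' ∈ X → ({k : ℕ | g k ≠ f' k}).Finite := by
    intro f' hf'
    have hf'W : ({k : ℕ | f' k ≠ f₀ k}).Finite := hXW hf'
    refine Set.Finite.subset (hg.union hf'W) ?_
    intro k hk
    by_contra hk'
    simp only [Set.mem_union, Set.mem_setOf_eq, not_or, not_not] at hk'
    exact hk (hk'.1.trans hk'.2.symm)
  have main : ∀ m : ℕ, ∀ f' : ℕ → U, ∀ hf' : f' ∈ X,
      (∀ i, i < n → g i = f' i) → (hDfin f' hf').toFinset.card ≤ m → g ∈ X := by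
    intro m
    induction m with
    | zero =>
      intro f' hf' hag hc
      have he : (hDfin f' hf').toFinset = ∅ := Finset.card_eq_zero.mp (Nat.le_zero.mp hc)
      have : g = f' := by
        funext k
        by_contra hk
        have : k ∈ (hDfin f' hf').toFinset := by
          simp only [Set.Finite.mem_toFinset, Set.mem_setOf_eq]; exact hk
        simp [he] at this
      exact this ▸ hf'
    | succ m ih =>
      intro f' hf' hag hc
      by_cases hE : ∃ j, g j ≠ f' j
      · obtain ⟨j, hj⟩ := hE
        have hjn : n ≤ j := by
          by_contra h
          exact hj (hag j (Nat.lt_of_not_le h))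
        set f'' := Function.update f' j (g j) with hf''def
        have hf''W : f'' ∈ {f : ℕ → U | {k : ℕ | f k ≠ f₀ k}.Finite} := by
          have hf'W : ({k : ℕ | f' k ≠ f₀ k}).Finite := hXW hf'
          refine Set.Finite.subset (hf'W.insert j) ?_
          intro k hk
          rcases eq_or_ne k j with rfl | hkj
          · exact Set.mem_insert _ _
          · refine Set.mem_insert_of_mem _ ?_
            simpa only [Set.mem_setOf_eq, hf''def, Function.update_of_ne hkj] using hk
        have hf''X : f'' ∈ X := by
          refine hX j hjn f' hf' f'' hf''W ?_
          intro k hk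
          simp [hf''def, Function.update_of_ne hk]
        have hag'' : ∀ i, i < n → g i = f'' i := by
          intro i hi
          have : i ≠ j := by omega
          simp [hf''def, Function.update_of_ne this, hag i hi]
        refine ih f'' hf''X hag'' ?_
        have hsub : (hDfin f'' hf''X).toFinset ⊆ (hDfin f' hf').toFinset.erase j := by
          intro k hk
          simp only [Set.Finite.mem_toFinset, Set.mem_setOf_eq] at hk
          rcases eq_or_ne k j with rfl | hkj
          · simp [hf''def] at hk
          · refine Finset.mem_erase.mpr ⟨hkj, ?_⟩
            simp only [Set.Finite.mem_toFinset, Set.mem_setOf_eq]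
            simpa [hf''def, Function.update_of_ne hkj] using hk
        have hjmem : j ∈ (hDfin f' hf').toFinset := by
          simp only [Set.Finite.mem_toFinset, Set.mem_setOf_eq]; exact hj
        calc (hDfin f'' hf''X).toFinset.card
            ≤ ((hDfin f' hf').toFinset.erase j).card := Finset.card_le_card hsub
          _ = (hDfin f' hf').toFinset.card - 1 := Finset.card_erase_of_mem hjmem
          _ ≤ m := by omega
      · push_neg at hE
        have : g = f' := funext hE
        exact this ▸ hf'
  exact main (hDfin f hf).toFinset.card f hf hagree le_rfl

end Aux

/-- Let `W` be the weak space determined by `f₀ : ω → U`, and let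
`B` consist of the subsets of `W` invariant under changing a coordinate
`j ≥ n`. Then `B` is a Boolean subalgebra of `℘(W)`, `B` is atomic, its atoms
are exactly the sets `{g ∈ W : g↾n = s}` for `s ∈ ⁿU`, and `B` is isomorphic
as a Boolean algebra (via an order isomorphism) to `℘(ⁿU)`. -/
theorem stmt14 (U : Type*) [Nonempty U] (n : ℕ) (f₀ : ℕ → U)
    (W : Set (ℕ → U))
    (hW : W = {f : ℕ → U | {k : ℕ | f k ≠ f₀ k}.Finite})
    (B : Set (Set (ℕ → U)))
    (hB : B = {X : Set (ℕ → U) | X ⊆ W ∧ ∀ j : ℕ, n ≤ j →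
        ∀ f ∈ X, ∀ g ∈ W, (∀ k : ℕ, k ≠ j → g k = f k) → g ∈ X}) :
    (∅ ∈ B) ∧ (W ∈ B) ∧
    (∀ X ∈ B, ∀ Y ∈ B, X ∪ Y ∈ B) ∧
    (∀ X ∈ B, ∀ Y ∈ B, X ∩ Y ∈ B) ∧
    (∀ X ∈ B, W \ X ∈ B) ∧
    -- atoms of B are exactly the sets {g ∈ W : g↾n = s}
    (∀ X ∈ B, ((X ≠ ∅ ∧ ∀ Y ∈ B, Y ⊆ X → Y = ∅ ∨ Y = X) ↔
      ∃ s : Fin n → U, X = {g : ℕ → U | g ∈ W ∧ ∀ i : Fin n, g i = s i})) ∧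
    -- B is atomic
    (∀ X ∈ B, X ≠ ∅ →
      ∃ Y ∈ B, Y ⊆ X ∧ Y ≠ ∅ ∧ ∀ Z ∈ B, Z ⊆ Y → Z = ∅ ∨ Z = Y) ∧
    -- B is isomorphic (as a Boolean algebra, via an order isomorphism)
    -- to the powerset of ⁿU
    (∃ e : {X : Set (ℕ → U) // X ∈ B} ≃ Set (Fin n → U),
      ∀ X Y : {X : Set (ℕ → U) // X ∈ B}, X.1 ⊆ Y.1 ↔ e X ⊆ e Y) := by
  subst hW hB
  set W : Set (ℕ → U) := {f : ℕ → U | {k : ℕ | f k ≠ f₀ k}.Finite} with hWdef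
  -- the key closure lemma, specialized
  have key : ∀ X : Set (ℕ → U), (X ⊆ W ∧ ∀ j : ℕ, n ≤ j →
      ∀ f ∈ X, ∀ g ∈ W, (∀ k : ℕ, k ≠ j → g k = f k) → g ∈ X) →
      ∀ f ∈ X, ∀ g ∈ W, (∀ i, i < n → g i = f i) → g ∈ X := by
    intro X hX f hf g hg hag
    exact stmt14_key n f₀ X hX.1 hX.2 hf hg hag
  -- extension of s : Fin n → U to ℕ → U
  set ext : (Fin n → U) → (ℕ → U) :=
    fun s k => if h : k < n then s ⟨k, h⟩ else f₀ k with hextdef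
  have hextW : ∀ s, ext s ∈ W := by
    intro s
    refine Set.Finite.subset (Set.finite_Iio n) ?_
    intro k hk
    simp only [Set.mem_setOf_eq, hextdef] at hk
    by_contra h
    simp only [Set.mem_Iio, not_lt] at h
    exact hk (by simp [Nat.not_lt.mpr h])
  have hextres : ∀ s : Fin n → U, ∀ i : Fin n, ext s i = s i := by
    intro s i
    simp [hextdef, i.isLt]
  -- the atom sets
  set A : (Fin n → U) → Set (ℕ → U) :=
    fun s => {g : ℕ → U | g ∈ W ∧ ∀ i : Fin n, g i = s i} with hAdef
  have hAB : ∀ s, A s ∈ {X : Set (ℕ → U) | X ⊆ W ∧ ∀ j : ℕ, n ≤ j →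
      ∀ f ∈ X, ∀ g ∈ W, (∀ k : ℕ, k ≠ j → g k = f k) → g ∈ X} := by
    intro s
    constructor
    · intro g hg; exact hg.1
    · intro j hj f hf g hg hk
      refine ⟨hg, fun i => ?_⟩
      have hij : (i : ℕ) ≠ j := by omega
      rw [hk i hij]; exact hf.2 i
  have hAne : ∀ s, ext s ∈ A s := fun s => ⟨hextW s, hextres s⟩
  -- if g ∈ X ∈ B then A (g↾n) ⊆ X
  have hAsub : ∀ X : Set (ℕ → U), (X ⊆ W ∧ ∀ j : ℕ, n ≤ j →
      ∀ f ∈ X, ∀ g ∈ W, (∀ k : ℕ, k ≠ j → g k = f k) → g ∈ X) →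
      ∀ g ∈ X, A (fun i : Fin n => g i) ⊆ X := by
    intro X hX g hg h hh
    exact key X hX g hg h hh.1 (fun i hi => hh.2 ⟨i, hi⟩)
  have hWB : W ∈ {X : Set (ℕ → U) | X ⊆ W ∧ ∀ j : ℕ, n ≤ j →
      ∀ f ∈ X, ∀ g ∈ W, (∀ k : ℕ, k ≠ j → g k = f k) → g ∈ X} :=
    ⟨le_refl _, fun _ _ _ _ g hg _ => hg⟩
  refine ⟨⟨Set.empty_subset _, fun _ _ f hf => absurd hf (Set.notMem_empty f)⟩,
    hWB, ?_, ?_, ?_, ?_, ?_, ?_⟩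
  · -- union
    intro X hX Y hY
    refine ⟨Set.union_subset hX.1 hY.1, ?_⟩
    intro j hj f hf g hg hk
    rcases hf with hf | hf
    · exact Or.inl (hX.2 j hj f hf g hg hk)
    · exact Or.inr (hY.2 j hj f hf g hg hk)
  · -- intersection
    intro X hX Y hY
    refine ⟨fun x hx => hX.1 hx.1, ?_⟩
    intro j hj f hf g hg hk
    exact ⟨hX.2 j hj f hf.1 g hg hk, hY.2 j hj f hf.2 g hg hk⟩
  · -- complement
    intro X hX
    refine ⟨Set.diff_subset, ?_⟩
    intro j hj f hf g hg hk
    refine ⟨hg, fun hgX => ?_⟩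
    have hfX : f ∈ X := by
      refine hX.2 j hj g hgX f (hf.1) ?_
      intro k hk'
      exact (hk k hk').symm
    exact hf.2 hfX
  · -- atoms characterization
    intro X hX
    constructor
    · rintro ⟨hXne, hXmin⟩
      obtain ⟨g, hg⟩ := Set.nonempty_iff_ne_empty.mpr hXne
      refine ⟨fun i : Fin n => g i, ?_⟩
      have h1 : A (fun i : Fin n => g i) ⊆ X := hAsub X hX g hg
      have h2 := hXmin _ (hAB _) h1
      rcases h2 with h2 | h2
      · exfalso
        have := hAne (fun i : Fin n => g i)
        rw [h2] at this
        exact this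
      · exact h2.symm
    · rintro ⟨s, rfl⟩
      constructor
      · intro h
        have h2 := hAne s
        simp only [hAdef] at h2
        rw [h] at h2
        exact h2
      · intro Y hY hYX
        by_cases hYne : Y = ∅
        · exact Or.inl hYne
        · right
          obtain ⟨h, hh⟩ := Set.nonempty_iff_ne_empty.mpr hYne
          have hres : (fun i : Fin n => h i) = s := by
            funext i; exact (hYX hh).2 i
          have : A s ⊆ Y := by
            rw [← hres]; exact hAsub Y hY h hh
          exact Set.Subset.antisymm hYX this
  · -- atomicity
    intro X hX hXne
    obtain ⟨g, hg⟩ := Set.nonempty_iff_ne_empty.mpr hXne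
    set s : Fin n → U := fun i => g i with hsdef
    refine ⟨A s, hAB s, hAsub X hX g hg, ?_, ?_⟩
    · intro h
      have := hAne s
      rw [h] at this
      exact this
    · intro Z hZ hZA
      by_cases hZne : Z = ∅
      · exact Or.inl hZne
      · right
        obtain ⟨h, hh⟩ := Set.nonempty_iff_ne_empty.mpr hZne
        have hres : (fun i : Fin n => h i) = s := by
          funext i; exact (hZA hh).2 i
        have : A s ⊆ Z := by
          rw [← hres]; exact hAsub Z hZ h hh
        exact Set.Subset.antisymm hZA this
  · -- isomorphism
    set toF : {X : Set (ℕ → U) // X ∈ {X : Set (ℕ → U) | X ⊆ W ∧ ∀ j : ℕ, n ≤ j →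
        ∀ f ∈ X, ∀ g ∈ W, (∀ k : ℕ, k ≠ j → g k = f k) → g ∈ X}} →
        Set (Fin n → U) :=
      fun X => {s : Fin n → U | ext s ∈ X.1} with htoF
    have hmono : ∀ X : {X : Set (ℕ → U) // X ∈ {X : Set (ℕ → U) | X ⊆ W ∧ ∀ j : ℕ, n ≤ j →
        ∀ f ∈ X, ∀ g ∈ W, (∀ k : ℕ, k ≠ j → g k = f k) → g ∈ X}},
        ∀ g ∈ X.1, ext (fun i : Fin n => g i) ∈ X.1 := by
      intro X g hg
      refine key X.1 X.2 g hg _ (hextW (fun i : Fin n => g i)) (fun i hi => ?_)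
      rw [hextdef]
      simp [hi]
    refine ⟨⟨toF, fun S => ⟨{g : ℕ → U | g ∈ W ∧ (fun i : Fin n => g i) ∈ S}, ?_⟩,
      ?_, ?_⟩, ?_⟩
    · -- invFun lands in B
      constructor
      · intro g hg; exact hg.1
      · intro j hj f hf g hg hk
        refine ⟨hg, ?_⟩
        have : (fun i : Fin n => g i) = (fun i : Fin n => f i) := by
          funext i
          exact hk i (by omega)
        rw [this]; exact hf.2
    · -- left inverse
      intro X
      ext g
      simp only [htoF, Set.mem_setOf_eq]
      constructor
      · rintro ⟨hgW, hgS⟩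
        refine key X.1 X.2 _ hgS g hgW (fun i hi => ?_)
        rw [hextdef]
        simp [hi]
      · intro hg
        exact ⟨X.2.1 hg, hmono X g hg⟩
    · -- right inverse
      intro S
      ext s
      simp only [htoF, Set.mem_setOf_eq]
      constructor
      · rintro ⟨-, h⟩
        have : (fun i : Fin n => ext s i) = s := by
          funext i; exact hextres s i
        rwa [this] at h
      · intro hs
        refine ⟨hextW s, ?_⟩
        have : (fun i : Fin n => ext s i) = s := by
          funext i; exact hextres s i
        rw [this]; exact hs
    · -- order iso
      intro X Y
      constructor
      · intro hXY s hs
        exact hXY hs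
      · intro hXY g hg
        have h1 : (fun i : Fin n => g i) ∈ toF X := hmono X g hg
        have h1' := hXY h1
        have h2 : ext (fun i : Fin n => g i) ∈ Y.1 := h1'
        refine key Y.1 Y.2 _ h2 g (X.2.1 hg) (fun i hi => ?_)
        rw [hextdef]
        simp [hi]
end

section
/- Let k ≥ 1 and let f : S → ℕ be a strictly increasing function on a finite subset S of a linear order, such that f(s) ≥ 3^k for all s ∈ S and |f(s) − f(t)| ≥ 3^k for all distinct s, t ∈ S. Then for any x in the linear order with x ∉ S, there is a strictly increasing extension f' : S ∪ {x} → ℕ of f such that f'(s) ≥ 3^{k−1} for all s and |f'(s) − f'(t)| ≥ 3^{k−1} for all distinct s, t ∈ S ∪ {x}. -/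
/-- widely-spaced-range maintenance lemma. If `f` is strictly
increasing on a finite set `S` in a linear order, with all values `≥ 3^k` and
pairwise gaps `≥ 3^k` (`k ≥ 1`), then for any `x ∉ S` there is a strictly
increasing extension `f'` to `S ∪ {x}` with all values `≥ 3^(k-1)` and
pairwise gaps `≥ 3^(k-1)`. -/
theorem stmt18 (k : ℕ) (hk : 1 ≤ k) (α : Type*) [LinearOrder α]
    [DecidableEq α] (S : Finset α) (f : α → ℕ)
    (hmono : ∀ s ∈ S, ∀ t ∈ S, s < t → f s < f t)
    (hbig : ∀ s ∈ S, 3 ^ k ≤ f s)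
    (hgap : ∀ s ∈ S, ∀ t ∈ S, s ≠ t → (3 : ℤ) ^ k ≤ |(f s : ℤ) - (f t : ℤ)|)
    (x : α) (hx : x ∉ S) :
    ∃ f' : α → ℕ,
      (∀ s ∈ S, f' s = f s) ∧
      (∀ s ∈ insert x S, ∀ t ∈ insert x S, s < t → f' s < f' t) ∧
      (∀ s ∈ insert x S, 3 ^ (k - 1) ≤ f' s) ∧
      (∀ s ∈ insert x S, ∀ t ∈ insert x S, s ≠ t →
        (3 : ℤ) ^ (k - 1) ≤ |(f' s : ℤ) - (f' t : ℤ)|) := by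
  have hpow : 3 ^ k = 3 * 3 ^ (k - 1) := by
    rw [← pow_succ']; congr 1; omega
  have hpos : 0 < 3 ^ (k - 1) := Nat.pow_pos (by norm_num)
  have hcast : ((3 ^ (k - 1) : ℕ) : ℤ) = (3 : ℤ) ^ (k - 1) := by push_cast; ring
  have hne : ∀ t ∈ S, t ≠ x := fun t ht => ne_of_mem_of_not_mem ht hx
  -- it suffices to find a suitable value v for x
  suffices h : ∃ v : ℕ, 3 ^ (k - 1) ≤ v ∧
      (∀ l ∈ S, l < x → f l + 3 ^ (k - 1) ≤ v) ∧
      (∀ u ∈ S, x < u → v + 3 ^ (k - 1) ≤ f u) by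
    obtain ⟨v, hv1, hA, hB⟩ := h
    refine ⟨Function.update f x v, ?_, ?_, ?_, ?_⟩
    · intro s hs
      exact Function.update_of_ne (hne s hs) _ _
    · intro s hs t ht hst
      rcases Finset.mem_insert.mp hs with hsx | hs'
      · rcases Finset.mem_insert.mp ht with htx | ht'
        · exact absurd hst (by rw [hsx, htx]; exact lt_irrefl _)
        · rw [hsx, Function.update_self, Function.update_of_ne (hne t ht')]
          have := hB t ht' (hsx ▸ hst)
          omega
      · rcases Finset.mem_insert.mp ht with htx | ht'
        · rw [htx, Function.update_self, Function.update_of_ne (hne s hs')]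
          have := hA s hs' (htx ▸ hst)
          omega
        · rw [Function.update_of_ne (hne s hs'), Function.update_of_ne (hne t ht')]
          exact hmono s hs' t ht' hst
    · intro s hs
      rcases Finset.mem_insert.mp hs with hsx | hs'
      · rw [hsx, Function.update_self]; exact hv1
      · rw [Function.update_of_ne (hne s hs')]
        calc 3 ^ (k - 1) ≤ 3 ^ k := Nat.pow_le_pow_right (by norm_num) (Nat.sub_le _ _)
          _ ≤ f s := hbig s hs'
    · intro s hs t ht hst
      rcases Finset.mem_insert.mp hs with hsx | hs'
      · rcases Finset.mem_insert.mp ht with htx | ht'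
        · exact absurd (hsx.trans htx.symm) hst
        · rw [hsx, Function.update_self, Function.update_of_ne (hne t ht')]
          rcases lt_or_gt_of_ne (hsx ▸ hst) with h | h
          · have := hB t ht' h
            have h2 : (3 : ℤ) ^ (k - 1) ≤ (f t : ℤ) - v := by
              rw [← hcast]; push_cast; omega
            calc (3:ℤ) ^ (k-1) ≤ (f t : ℤ) - v := h2
              _ ≤ |(v : ℤ) - f t| := by rw [abs_sub_comm]; exact le_abs_self _
          · have := hA t ht' h
            have h2 : (3 : ℤ) ^ (k - 1) ≤ (v : ℤ) - f t := by
              rw [← hcast]; push_cast; omega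
            exact h2.trans (le_abs_self _)
      · rcases Finset.mem_insert.mp ht with htx | ht'
        · rw [htx, Function.update_self, Function.update_of_ne (hne s hs')]
          rcases lt_or_gt_of_ne (htx ▸ hst) with h | h
          · have := hA s hs' h
            have h2 : (3 : ℤ) ^ (k - 1) ≤ (v : ℤ) - f s := by
              rw [← hcast]; push_cast; omega
            calc (3:ℤ) ^ (k-1) ≤ (v : ℤ) - f s := h2
              _ ≤ |(f s : ℤ) - v| := by rw [abs_sub_comm]; exact le_abs_self _
          · have := hB s hs' h
            have h2 : (3 : ℤ) ^ (k - 1) ≤ (f s : ℤ) - v := by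
              rw [← hcast]; push_cast; omega
            exact h2.trans (le_abs_self _)
        · rw [Function.update_of_ne (hne s hs'), Function.update_of_ne (hne t ht')]
          calc (3:ℤ) ^ (k-1) ≤ (3:ℤ) ^ k := pow_le_pow_right₀ (by norm_num) (Nat.sub_le _ _)
            _ ≤ _ := hgap s hs' t ht' hst
  -- now construct v
  by_cases hL : (S.filter (· < x)).Nonempty
  · set m := (S.filter (· < x)).max' hL with hm
    have hmmem := (S.filter (· < x)).max'_mem hL
    rw [Finset.mem_filter] at hmmem
    obtain ⟨hmS, hmx⟩ := hmmem
    refine ⟨f m + 3 ^ (k - 1), by omega, ?_, ?_⟩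
    · intro l hl hlx
      have hlmem : l ∈ S.filter (· < x) := Finset.mem_filter.mpr ⟨hl, hlx⟩
      have hlm : l ≤ m := Finset.le_max' _ l hlmem
      rcases eq_or_lt_of_le hlm with rfl | h
      · omega
      · have := hmono l hl m hmS h
        omega
    · intro u hu hxu
      have hmu : m < u := hmx.trans hxu
      have h1 : f m < f u := hmono m hmS u hu hmu
      have h2 := hgap u hu m hmS (ne_of_gt hmu)
      have h2' : (3:ℤ) ^ k ≤ (f u : ℤ) - f m := by
        rwa [abs_of_nonneg (by push_cast; omega)] at h2
      have h3 : ((3 ^ k : ℕ) : ℤ) = (3:ℤ) ^ k := by push_cast; ring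
      rw [← h3] at h2'
      omega
  · refine ⟨3 ^ (k - 1), le_refl _, ?_, ?_⟩
    · intro l hl hlx
      exact absurd ⟨l, Finset.mem_filter.mpr ⟨hl, hlx⟩⟩ hL
    · intro u hu _
      have := hbig u hu
      omega
end
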